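/- Let q be a prime power and let v ≥ 2, 1 ≤ k ≤ v, and d be integers. Then A_q(v,d;k) ≤ ⌊ (q^v−1)/(q^k−1) · A_q(v−1,d;k−1) ⌋, where ⌊·⌋ denotes the floor of the rational number. -/
import Mathlib


open scoped Classical

/-- The subspace distance `d_S(X,Y) = dim(X+Y) - dim(X∩Y)` between two subspaces. -/
noncomputable def subspaceDist {F V : Type*} [Field F] [AddCommGroup V] [Module F V]
    (X Y : Submodule F V) : ℕ :=
  Module.finrank F ↥(X ⊔ Y) - Module.finrank F ↥(X ⊓ Y)

/-- `C` is a subspace code with minimum subspace distance at least `d`. -/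
def IsSubspaceCode {F V : Type*} [Field F] [AddCommGroup V] [Module F V]
    (d : ℕ) (C : Finset (Submodule F V)) : Prop :=
  ∀ X ∈ C, ∀ Y ∈ C, X ≠ Y → d ≤ subspaceDist X Y

/-- `A_q(v,d)`: the maximum cardinality of a subspace code in `F^v` (where `#F = q`)
with minimum subspace distance at least `d`. -/
noncomputable def maxCode (F : Type*) [Field F] [Fintype F] (v d : ℕ) : ℕ :=
  sSup {n | ∃ C : Finset (Submodule F (Fin v → F)), IsSubspaceCode d C ∧ C.card = n}

/-- `A_q(v,d;k)`: the maximum cardinality of a constant dimension code in `F^v`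
(where `#F = q`) with minimum subspace distance at least `d` and all codewords of
dimension `k`. -/
noncomputable def maxCodeDim (F : Type*) [Field F] [Fintype F] (v d k : ℕ) : ℕ :=
  sSup {n | ∃ C : Finset (Submodule F (Fin v → F)), IsSubspaceCode d C ∧
    (∀ X ∈ C, Module.finrank F ↥X = k) ∧ C.card = n}

/-- `[x]_q = (q^x - 1)/(q - 1)`, the number of points of `PG(F_q^x)`. -/
def gaussNum (q x : ℕ) : ℕ := ∑ i ∈ Finset.range x, q ^ i

open Module Submodule

set_option synthInstance.maxHeartbeats 1000000
set_option maxHeartbeats 1000000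

section Aux

variable {F : Type*} [Field F] [Fintype F]

/-- The defining set of `maxCodeDim` is bounded above. -/
lemma johnson_bddAux (m d k : ℕ) : BddAbove {n | ∃ C : Finset (Submodule F (Fin m → F)),
    IsSubspaceCode d C ∧ (∀ X ∈ C, finrank F X = k) ∧ C.card = n} := by
  have : Finite (Submodule F (Fin m → F)) :=
    Finite.of_injective (fun X => (X : Set (Fin m → F))) SetLike.coe_injective
  have := Fintype.ofFinite (Submodule F (Fin m → F))
  exact ⟨Fintype.card (Submodule F (Fin m → F)), fun n ⟨C, _, _, hc⟩ => hc ▸ C.card_le_univ⟩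

/-- For a nonzero point `x`, the codewords through `x`, quotiented by `span {x}`,
form a constant dimension code of dimension `k-1` in a `(v-1)`-dimensional space. -/
lemma johnson_point_bound (v d k : ℕ) (hv : 1 ≤ v) (hk : 1 ≤ k)
    (x : Fin v → F) (hx : x ≠ 0)
    (C : Finset (Submodule F (Fin v → F))) (hC : IsSubspaceCode d C)
    (hdim : ∀ X ∈ C, finrank F X = k) :
    (C.filter (fun X => x ∈ X)).card ≤ maxCodeDim F (v - 1) d (k - 1) := by
  set P : Submodule F (Fin v → F) := Submodule.span F {x} with hPdef
  have hP1 : finrank F P = 1 := finrank_span_singleton hx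
  have hquot : finrank F ((Fin v → F) ⧸ P) = v - 1 := by
    have h := Submodule.finrank_quotient_add_finrank P
    rw [hP1, Module.finrank_fin_fun] at h
    omega
  let e : ((Fin v → F) ⧸ P) ≃ₗ[F] (Fin (v - 1) → F) :=
    LinearEquiv.ofFinrankEq _ _ (by rw [hquot, Module.finrank_fin_fun])
  set φ : (Fin v → F) →ₗ[F] (Fin (v - 1) → F) := e.toLinearMap ∘ₗ P.mkQ with hφdef
  have hker : LinearMap.ker φ = P := by
    rw [hφdef, LinearMap.ker_comp, LinearEquiv.ker, Submodule.comap_bot, Submodule.ker_mkQ]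
  have hrank : ∀ W : Submodule F (Fin v → F), P ≤ W →
      finrank F (W.map φ) + 1 = finrank F W := by
    intro W hW
    have h1 := LinearMap.finrank_range_add_finrank_ker (φ.domRestrict W)
    rw [LinearMap.range_domRestrict] at h1
    have h3 : finrank F (LinearMap.ker (φ.domRestrict W)) = 1 := by
      rw [LinearMap.ker_domRestrict, hker,
        (Submodule.comapSubtypeEquivOfLe hW).finrank_eq, hP1]
    omega
  have hinf : ∀ X Y : Submodule F (Fin v → F), P ≤ Y →
      (X ⊓ Y).map φ = X.map φ ⊓ Y.map φ := by
    intro X Y hY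
    refine le_antisymm (le_inf (Submodule.map_mono inf_le_left)
      (Submodule.map_mono inf_le_right)) ?_
    rintro z ⟨hz1, hz2⟩
    obtain ⟨a, haX, rfl⟩ := hz1
    obtain ⟨b, hbY, hba⟩ := hz2
    have hkmem : b - a ∈ LinearMap.ker φ := by
      simp [LinearMap.mem_ker, map_sub, hba]
    have haY : a ∈ Y := by
      have := Y.sub_mem hbY (hY (hker ▸ hkmem))
      simpa using this
    exact ⟨a, ⟨haX, haY⟩, rfl⟩
  have hsub : ∀ X ∈ C.filter (fun X => x ∈ X), P ≤ X := by
    intro X hX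
    rw [Finset.mem_filter] at hX
    exact (Submodule.span_singleton_le_iff_mem x X).2 hX.2
  have hinjOn : Set.InjOn (Submodule.map φ) ↑(C.filter (fun X => x ∈ X)) := by
    intro X hX Y hY hXY
    have : Submodule.comap φ (X.map φ) = Submodule.comap φ (Y.map φ) := by rw [hXY]
    rwa [Submodule.comap_map_eq_self (hker ▸ hsub X hX),
      Submodule.comap_map_eq_self (hker ▸ hsub Y hY)] at this
  set D : Finset (Submodule F (Fin (v - 1) → F)) :=
    (C.filter (fun X => x ∈ X)).image (Submodule.map φ) with hDdef
  have hdist : ∀ X ∈ C.filter (fun X => x ∈ X), ∀ Y ∈ C.filter (fun X => x ∈ X),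
      subspaceDist (X.map φ) (Y.map φ) = subspaceDist X Y := by
    intro X hX Y hY
    have hPX := hsub X hX
    have hPY := hsub Y hY
    have h1 : finrank F ↥((X ⊔ Y).map φ) + 1 = finrank F ↥(X ⊔ Y) :=
      hrank _ (le_trans hPX le_sup_left)
    have h2 : finrank F ↥((X ⊓ Y).map φ) + 1 = finrank F ↥(X ⊓ Y) :=
      hrank _ (le_inf hPX hPY)
    have hle : finrank F ↥(X ⊓ Y) ≤ finrank F ↥(X ⊔ Y) :=
      Submodule.finrank_mono (le_trans inf_le_left le_sup_left)
    unfold subspaceDist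
    rw [← Submodule.map_sup, ← hinf X Y hPY]
    omega
  have hcard : D.card = (C.filter (fun X => x ∈ X)).card :=
    Finset.card_image_of_injOn hinjOn
  have hcode : IsSubspaceCode d D := by
    intro X' hX' Y' hY' hne
    rw [hDdef, Finset.mem_image] at hX' hY'
    obtain ⟨X, hX, rfl⟩ := hX'
    obtain ⟨Y, hY, rfl⟩ := hY'
    have hXY : X ≠ Y := fun h => hne (by rw [h])
    rw [hdist X hX Y hY]
    exact hC X (Finset.mem_of_mem_filter X hX) Y (Finset.mem_of_mem_filter Y hY) hXY
  have hdims : ∀ X' ∈ D, finrank F X' = k - 1 := by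
    intro X' hX'
    rw [hDdef, Finset.mem_image] at hX'
    obtain ⟨X, hX, rfl⟩ := hX'
    have := hrank X (hsub X hX)
    have := hdim X (Finset.mem_of_mem_filter X hX)
    omega
  rw [← hcard]
  exact le_csSup (johnson_bddAux (v - 1) d (k - 1)) ⟨D, hcode, hdims, rfl⟩

end Aux

/-- Johnson type bound II: A_q(v,d;k) ≤ ⌊(q^v-1)/(q^k-1) · A_q(v-1,d;k-1)⌋. -/
theorem johnson_bound_II_point (q v d k : ℕ) (F : Type*) [Field F] [Fintype F]
    (hF : Fintype.card F = q) (hv : 2 ≤ v) (hk1 : 1 ≤ k) (hkv : k ≤ v) :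
    maxCodeDim F v d k ≤
      ⌊((q : ℚ) ^ v - 1) / ((q : ℚ) ^ k - 1) * (maxCodeDim F (v - 1) d (k - 1) : ℚ)⌋₊ := by
  have hq2 : 2 ≤ q := by rw [← hF]; exact Fintype.one_lt_card
  set A' := maxCodeDim F (v - 1) d (k - 1) with hA'
  have hne : ({n | ∃ C : Finset (Submodule F (Fin v → F)), IsSubspaceCode d C ∧
      (∀ X ∈ C, Module.finrank F ↥X = k) ∧ C.card = n} : Set ℕ).Nonempty := by
    refine ⟨0, ∅, ?_, ?_, rfl⟩
    · intro X hX; simp at hX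
    · intro X hX; simp at hX
  refine csSup_le hne ?_
  rintro n ⟨C, hC, hdim, rfl⟩
  -- counting
  set N : Finset (Fin v → F) := Finset.univ.filter (fun x => x ≠ 0) with hN
  have hNcard : N.card = q ^ v - 1 := by
    have : N = Finset.univ.erase 0 := by
      ext y; simp [hN]
    rw [this, Finset.card_erase_of_mem (Finset.mem_univ 0), Finset.card_univ,
      Fintype.card_fun, Fintype.card_fin, hF]
  have hXcard : ∀ X ∈ C, (N.filter (fun x => x ∈ X)).card = q ^ k - 1 := by
    intro X hX
    have hcardX : (Finset.univ.filter (fun x => x ∈ X)).card = q ^ k := by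
      rw [← Fintype.card_subtype]
      rw [show Fintype.card {x // x ∈ X} = Fintype.card X from rfl]
      rw [card_eq_pow_finrank (K := F) (V := X), hF, hdim X hX]
    have heq : N.filter (fun x => x ∈ X) = (Finset.univ.filter (fun x => x ∈ X)).erase 0 := by
      ext y
      simp [hN, Finset.mem_erase, and_comm]
    rw [heq, Finset.card_erase_of_mem (by simp [X.zero_mem]), hcardX]
  -- double counting
  have hswap : ∑ x ∈ N, (C.filter (fun X => x ∈ X)).card
      = ∑ X ∈ C, (N.filter (fun x => x ∈ X)).card := by
    simp only [Finset.card_filter]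
    rw [Finset.sum_comm]
  have hcount : C.card * (q ^ k - 1) ≤ (q ^ v - 1) * A' := by
    have h1 : ∑ X ∈ C, (N.filter (fun x => x ∈ X)).card = C.card * (q ^ k - 1) := by
      rw [Finset.sum_congr rfl hXcard, Finset.sum_const, smul_eq_mul]
    have h2 : ∑ x ∈ N, (C.filter (fun X => x ∈ X)).card ≤ N.card * A' := by
      refine le_trans (Finset.sum_le_sum ?_) (by rw [Finset.sum_const, smul_eq_mul])
      intro x hx
      rw [hN, Finset.mem_filter] at hx
      exact johnson_point_bound v d k (by omega) hk1 x hx.2 C hC hdim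
    rw [← h1, ← hswap]
    rw [hNcard] at h2
    exact h2
  -- pass to rationals
  have hqk1 : 1 ≤ q ^ k := Nat.one_le_pow _ _ (by omega)
  have hqv1 : 1 ≤ q ^ v := Nat.one_le_pow _ _ (by omega)
  have hpos : (0 : ℚ) < (q : ℚ) ^ k - 1 := by
    have h2q : (2:ℚ) ≤ (q:ℚ) := by exact_mod_cast hq2
    have : (2:ℚ) ≤ (q:ℚ) ^ k := le_trans h2q (by
      calc (q:ℚ) = (q:ℚ)^1 := (pow_one _).symm
      _ ≤ (q:ℚ)^k := pow_le_pow_right₀ (by linarith) hk1)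
    linarith
  refine Nat.le_floor ?_
  have hcast : (C.card : ℚ) * ((q : ℚ) ^ k - 1) ≤ ((q : ℚ) ^ v - 1) * (A' : ℚ) := by
    have h3 : ((C.card * (q ^ k - 1) : ℕ) : ℚ) ≤ (((q ^ v - 1) * A' : ℕ) : ℚ) := by
      exact_mod_cast hcount
    rwa [Nat.cast_mul, Nat.cast_mul, Nat.cast_sub hqk1, Nat.cast_sub hqv1,
      Nat.cast_pow, Nat.cast_pow, Nat.cast_one] at h3
  rw [div_mul_eq_mul_div, le_div_iff₀ hpos]
  linarith
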